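/- Min-entropy purity bound: Let ξ_{AR} be a positive semidefinite matrix on H_A⊗H_R, let ζ_R be a positive definite matrix on H_R with Tr ζ_R = 1, and let λ ∈ ℝ be such that 2^{−λ} I_A⊗ζ_R − ξ_{AR} is positive semidefinite. Then Tr[ ((I_A⊗ζ_R^{−1/2}) ξ_{AR})² ] ≤ 2^{−λ} · Tr(ξ_{AR}). In particular, if ζ_R and λ saturate the definition of Hmin(A|R)_ξ, the left-hand side divided by Tr(ξ_{AR}) is at most 2^{−Hmin(A|R)_ξ}. -/

import Mathlib

open scoped Kronecker
open MeasureTheory Matrix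
open scoped ComplexOrder

noncomputable section

/-- The positive semidefinite square root of a positive semidefinite matrix (the
definition Mathlib had in December 2024, since removed). -/
def Matrix.PosSemidef.sqrt {n 𝕜 : Type*} [Fintype n] [RCLike 𝕜] [DecidableEq n]
    {A : Matrix n n 𝕜} (hA : A.PosSemidef) : Matrix n n 𝕜 :=
  (hA.1.eigenvectorUnitary : Matrix n n 𝕜) * diagonal ((↑) ∘ (√·) ∘ hA.1.eigenvalues) *
    (star hA.1.eigenvectorUnitary : Matrix n n 𝕜)

namespace Decoupling

/-- We equip the unitary group with its Borel σ-algebra. -/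
instance (n : Type*) [Fintype n] [DecidableEq n] :
    MeasurableSpace (Matrix.unitaryGroup n ℂ) := borel _

instance (n : Type*) [Fintype n] [DecidableEq n] :
    BorelSpace (Matrix.unitaryGroup n ℂ) := ⟨rfl⟩

/-- The trace norm (Schatten 1-norm) `‖X‖₁ = Tr √(XᴴX)` of a complex matrix. -/
def trNorm {n : Type*} [Fintype n] [DecidableEq n] (X : Matrix n n ℂ) : ℝ :=
  ((Matrix.posSemidef_conjTranspose_mul_self X).sqrt.trace).re

/-- The Hilbert–Schmidt norm (Schatten 2-norm) `‖X‖₂ = √(Tr (XᴴX))`. -/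
def hsNorm {n : Type*} [Fintype n] (X : Matrix n n ℂ) : ℝ :=
  Real.sqrt ((Xᴴ * X).trace.re)

/-- Partial trace over the first tensor factor. -/
def ptrFst {a r : Type*} [Fintype a] (ρ : Matrix (a × r) (a × r) ℂ) : Matrix r r ℂ :=
  Matrix.of fun i j => ∑ k, ρ (k, i) (k, j)

/-- Partial trace over the second tensor factor. -/
def ptrSnd {a r : Type*} [Fintype r] (ρ : Matrix (a × r) (a × r) ℂ) : Matrix a a ℂ :=
  Matrix.of fun i j => ∑ k, ρ (i, k) (j, k)

/-- The maximally entangled state `Φ_{AA'}` on `H_A ⊗ H_{A'}`. -/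
def maxEnt (a : Type*) [Fintype a] [DecidableEq a] : Matrix (a × a) (a × a) ℂ :=
  Matrix.of fun p q => if p.1 = p.2 ∧ q.1 = q.2 then (Fintype.card a : ℂ)⁻¹ else 0

/-- The tensor product `T ⊗ E` of two superoperators (given on basis matrices, which
for linear `T`, `E` agrees with the usual tensor product of linear maps). -/
def tensorHom {a a' b r : Type*} [Fintype a] [Fintype a'] [DecidableEq a] [DecidableEq a']
    (T : Matrix a a ℂ → Matrix b b ℂ) (E : Matrix a' a' ℂ → Matrix r r ℂ)
    (M : Matrix (a × a') (a × a') ℂ) : Matrix (b × r) (b × r) ℂ :=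
  Matrix.of fun p q => ∑ i, ∑ j, ∑ k, ∑ l,
    M (i, k) (j, l) * T (Matrix.single i j 1) p.1 q.1
      * E (Matrix.single k l 1) p.2 q.2

/-- The Choi–Jamiołkowski representation `ω = (T ⊗ id)(Φ_{AA'})`, with the output (`B`)
factor first and the copy `A'` second. -/
def choi {a b : Type*} [Fintype a] [DecidableEq a]
    (T : Matrix a a ℂ → Matrix b b ℂ) : Matrix (b × a) (b × a) ℂ :=
  tensorHom T id (maxEnt a)

/-- Reindexing that exchanges the two tensor factors. -/
def swapIdx {a b : Type*} (M : Matrix (a × b) (a × b) ℂ) : Matrix (b × a) (b × a) ℂ :=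
  M.submatrix Prod.swap Prod.swap

/-- The conditional min-entropy `Hmin(A|B)_ρ` of a bipartite operator (conditioning on the
second tensor factor). -/
def Hmin {a b : Type*} [Fintype a] [DecidableEq a] [Fintype b]
    (ρ : Matrix (a × b) (a × b) ℂ) : ℝ :=
  sSup {x : ℝ | ∃ σ : Matrix b b ℂ, σ.PosSemidef ∧ σ.trace = 1 ∧
    ((2 : ℝ) ^ (-x) • ((1 : Matrix a a ℂ) ⊗ₖ σ) - ρ).PosSemidef}

/-- A subnormalized density operator. -/
def IsSubDensity {n : Type*} [Fintype n] (ρ : Matrix n n ℂ) : Prop :=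
  ρ.PosSemidef ∧ ρ.trace.re ≤ 1

/-- Conjugation `(U ⊗ 1_R) ρ (U ⊗ 1_R)ᴴ` on the first factor. -/
def conjA {a r : Type*} [Fintype a] [Fintype r] [DecidableEq r]
    (U : Matrix a a ℂ) (ρ : Matrix (a × r) (a × r) ℂ) : Matrix (a × r) (a × r) ℂ :=
  (U ⊗ₖ (1 : Matrix r r ℂ)) * ρ * (U ⊗ₖ (1 : Matrix r r ℂ))ᴴ

/-- Two-fold conjugation `U^{⊗2} M (U^{⊗2})ᴴ`. -/
def conj2 {a : Type*} [Fintype a] (U : Matrix a a ℂ) (M : Matrix (a × a) (a × a) ℂ) :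
    Matrix (a × a) (a × a) ℂ :=
  (U ⊗ₖ U) * M * (U ⊗ₖ U)ᴴ

/-- The Haar two-fold twirl `G_H(M) = ∫ U^{⊗2} M (U†)^{⊗2} dU` (entrywise integral). -/
def twirlHaar {a : Type*} [Fintype a] [DecidableEq a]
    (μ : Measure (Matrix.unitaryGroup a ℂ)) (M : Matrix (a × a) (a × a) ℂ) :
    Matrix (a × a) (a × a) ℂ :=
  Matrix.of fun p q => ∫ U : Matrix.unitaryGroup a ℂ, conj2 (U : Matrix a a ℂ) M p q ∂μ

/-- The two-fold twirl `G_W(M) = ∑ i, p i • U_i^{⊗2} M (U_i†)^{⊗2}` of a finite family. -/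
def twirlMix {ι a : Type*} [Fintype ι] [Fintype a] [DecidableEq a]
    (p : ι → ℝ) (V : ι → Matrix.unitaryGroup a ℂ) (M : Matrix (a × a) (a × a) ℂ) :
    Matrix (a × a) (a × a) ℂ :=
  ∑ i, p i • conj2 (V i : Matrix a a ℂ) M

/-- `‖S‖⋄ ≤ δ`: the trace norm of `(S ⊗ id_R)(X)` is at most `δ ‖X‖₁` for every ancilla `R`
and every `X`. -/
def DiamondLE {c : Type*} [Fintype c] [DecidableEq c]
    (S : Matrix c c ℂ → Matrix c c ℂ) (δ : ℝ) : Prop :=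
  ∀ (m : ℕ) (X : Matrix (c × Fin m) (c × Fin m) ℂ),
    trNorm (tensorHom S id X) ≤ δ * trNorm X

/-- `{(p i, V i)}` is a `δ`-approximate unitary two-design (w.r.t. the Haar probability
measure `μ`). -/
def IsApproxTwoDesign {ι a : Type*} [Fintype ι] [Fintype a] [DecidableEq a]
    (μ : Measure (Matrix.unitaryGroup a ℂ))
    (p : ι → ℝ) (V : ι → Matrix.unitaryGroup a ℂ) (δ : ℝ) : Prop :=
  (∀ i, 0 ≤ p i) ∧ (∑ i, p i = 1) ∧
    DiamondLE (fun M => twirlMix p V M - twirlHaar μ M) δ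

end Decoupling

namespace Decoupling

lemma Matrix.PosSemidef.sqrt_isHermitian' {n 𝕜 : Type*} [Fintype n] [RCLike 𝕜] [DecidableEq n]
    {A : Matrix n n 𝕜} (hA : A.PosSemidef) : hA.sqrt.IsHermitian := by
  unfold Matrix.PosSemidef.sqrt
  exact isHermitian_mul_mul_conjTranspose _
    (isHermitian_diagonal_of_self_adjoint _ (by ext i; simp))

lemma Matrix.PosSemidef.sqrt_mul_self' {n 𝕜 : Type*} [Fintype n] [RCLike 𝕜] [DecidableEq n]
    {A : Matrix n n 𝕜} (hA : A.PosSemidef) : hA.sqrt * hA.sqrt = A := by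
  unfold Matrix.PosSemidef.sqrt
  have hU : (star hA.1.eigenvectorUnitary : Matrix n n 𝕜) * (hA.1.eigenvectorUnitary : Matrix n n 𝕜) = 1 :=
    Unitary.star_mul_self_of_mem hA.1.eigenvectorUnitary.2
  have hD : diagonal (((↑) ∘ (√·) ∘ hA.1.eigenvalues) : n → 𝕜) * diagonal ((↑) ∘ (√·) ∘ hA.1.eigenvalues)
      = diagonal (RCLike.ofReal ∘ hA.1.eigenvalues) := by
    rw [diagonal_mul_diagonal]
    congr 1; ext i
    simp only [Function.comp_apply]
    rw [← RCLike.ofReal_mul, Real.mul_self_sqrt (hA.eigenvalues_nonneg i)]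
  conv_rhs => rw [hA.1.spectral_theorem]
  rw [Unitary.conjStarAlgAut_apply]
  calc _ = (hA.1.eigenvectorUnitary : Matrix n n 𝕜) * (diagonal ((↑) ∘ (√·) ∘ hA.1.eigenvalues) *
      ((star hA.1.eigenvectorUnitary : Matrix n n 𝕜) * (hA.1.eigenvectorUnitary : Matrix n n 𝕜)) *
      diagonal ((↑) ∘ (√·) ∘ hA.1.eigenvalues)) * (star hA.1.eigenvectorUnitary : Matrix n n 𝕜) := by
        simp only [Matrix.mul_assoc]
    _ = _ := by rw [hU, Matrix.mul_one, hD]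


lemma trace_re_nonneg_of_posSemidef {n : Type*} [Fintype n] [DecidableEq n] {M : Matrix n n ℂ}
    (hM : M.PosSemidef) : 0 ≤ M.trace.re := by
  have hdiag : ∀ i, 0 ≤ (M i i).re := by
    intro i
    have h0 := hM.dotProduct_mulVec_nonneg (Pi.single i 1)
    have heq : star (Pi.single i 1 : n → ℂ) ⬝ᵥ M *ᵥ Pi.single i 1 = M i i := by
      simp [dotProduct, Matrix.mulVec, Pi.single_apply, mul_ite, ite_mul,
        Finset.sum_ite_eq, Finset.sum_ite_eq']
    rw [heq] at h0
    exact (Complex.nonneg_iff.mp h0).1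
  have : M.trace.re = ∑ i, (M i i).re := by
    simp [Matrix.trace, Matrix.diag, Complex.re_sum]
  rw [this]
  exact Finset.sum_nonneg fun i _ => hdiag i

lemma kronecker_one_inv_conjTranspose {a r : Type*} [Fintype a] [DecidableEq a]
    [Fintype r] [DecidableEq r] {s : Matrix r r ℂ} (hs : s.IsHermitian) :
    ((1 : Matrix a a ℂ) ⊗ₖ s⁻¹)ᴴ = (1 : Matrix a a ℂ) ⊗ₖ s⁻¹ := by
  have hinv : (s⁻¹)ᴴ = s⁻¹ := (Matrix.IsHermitian.inv hs).eq
  ext ⟨i, j⟩ ⟨k, l⟩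
  simp only [Matrix.conjTranspose_apply, Matrix.kroneckerMap_apply, star_mul']
  rw [← Matrix.conjTranspose_apply, ← Matrix.conjTranspose_apply, hinv,
    Matrix.conjTranspose_one]

/-- **Min-entropy purity bound**: if `2^{-λ} 1_A ⊗ ζ_R − ξ_{AR}` is positive semidefinite for a
positive definite state `ζ_R`, then `Tr[((1_A ⊗ ζ_R^{-1/2}) ξ_{AR})²] ≤ 2^{-λ} Tr ξ_{AR}`. -/
theorem minentropy_purity_bound {a r : Type*} [Fintype a] [DecidableEq a]
    [Fintype r] [DecidableEq r]
    (ξ : Matrix (a × r) (a × r) ℂ) (hξ : ξ.PosSemidef)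
    (ζ : Matrix r r ℂ) (hζ : ζ.PosDef) (hζtr : ζ.trace = 1)
    (lam : ℝ)
    (h : ((2 : ℝ) ^ (-lam) • ((1 : Matrix a a ℂ) ⊗ₖ ζ) - ξ).PosSemidef) :
    (((((1 : Matrix a a ℂ) ⊗ₖ (hζ.posSemidef.sqrt)⁻¹) * ξ) *
        (((1 : Matrix a a ℂ) ⊗ₖ (hζ.posSemidef.sqrt)⁻¹) * ξ)).trace).re ≤
      (2 : ℝ) ^ (-lam) * ξ.trace.re := by
  set c : ℝ := (2 : ℝ) ^ (-lam) with hc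
  set s : Matrix r r ℂ := hζ.posSemidef.sqrt with hsdef
  set K : Matrix (a × r) (a × r) ℂ := (1 : Matrix a a ℂ) ⊗ₖ s⁻¹ with hKdef
  have hsH : s.IsHermitian := Matrix.PosSemidef.sqrt_isHermitian' hζ.posSemidef
  have hss : s * s = ζ := Matrix.PosSemidef.sqrt_mul_self' hζ.posSemidef
  -- s is invertible
  have hdet : IsUnit s.det := by
    have hd : s.det * s.det = ζ.det := by rw [← Matrix.det_mul, hss]
    have hζd : ζ.det ≠ 0 := hζ.det_pos.ne'
    have : s.det ≠ 0 := fun h0 => hζd (by rw [← hd, h0, mul_zero])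
    exact isUnit_iff_ne_zero.mpr this
  have hsinv : s⁻¹ * ζ * s⁻¹ = 1 := by
    rw [← hss]
    have : s⁻¹ * (s * s) * s⁻¹ = (s⁻¹ * s) * (s * s⁻¹) := by noncomm_ring
    rw [this, Matrix.nonsing_inv_mul s hdet, Matrix.mul_nonsing_inv s hdet, one_mul]
  have hKH : Kᴴ = K := kronecker_one_inv_conjTranspose (a := a) hsH
  have hKζK : K * ((1 : Matrix a a ℂ) ⊗ₖ ζ) * K = 1 := by
    rw [hKdef, ← Matrix.mul_kronecker_mul, ← Matrix.mul_kronecker_mul, one_mul, one_mul,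
      hsinv, Matrix.one_kronecker_one]
  -- conjugate the hypothesis by K
  have hD : ((c : ℝ) • (1 : Matrix (a × r) (a × r) ℂ) - K * ξ * K).PosSemidef := by
    have := h.mul_mul_conjTranspose_same K
    rw [hKH] at this
    have heq : K * ((c : ℝ) • ((1 : Matrix a a ℂ) ⊗ₖ ζ) - ξ) * K
        = (c : ℝ) • (1 : Matrix (a × r) (a × r) ℂ) - K * ξ * K := by
      rw [Matrix.mul_sub, Matrix.sub_mul, Matrix.mul_smul, Matrix.smul_mul, hKζK]
    rwa [heq] at this
  set t : Matrix (a × r) (a × r) ℂ := hξ.sqrt with htdef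
  have htH : tᴴ = t := (Matrix.PosSemidef.sqrt_isHermitian' hξ).eq
  have htt : t * t = ξ := Matrix.PosSemidef.sqrt_mul_self' hξ
  have hP : (t * ((c : ℝ) • (1 : Matrix (a × r) (a × r) ℂ) - K * ξ * K) * t).PosSemidef := by
    have := hD.mul_mul_conjTranspose_same t
    rwa [htH] at this
  have h0 := trace_re_nonneg_of_posSemidef hP
  have hexp : t * ((c : ℝ) • (1 : Matrix (a × r) (a × r) ℂ) - K * ξ * K) * t
      = (c : ℝ) • ξ - t * (K * ξ * K) * t := by
    rw [Matrix.mul_sub, Matrix.sub_mul, Matrix.mul_smul, Matrix.smul_mul, mul_one, htt]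
  have htrace : (t * (K * ξ * K) * t).trace = ((K * ξ) * (K * ξ)).trace := by
    rw [Matrix.trace_mul_comm, ← mul_assoc, htt, Matrix.trace_mul_comm, mul_assoc]
  rw [hexp, Matrix.trace_sub, htrace] at h0
  have hsmul : (((c : ℝ) • ξ).trace).re = c * ξ.trace.re := by
    rw [Matrix.trace_smul]
    simp [Complex.smul_re]
  rw [Complex.sub_re, hsmul] at h0
  linarith

end Decoupling
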